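/- Define the Jacobi differential operator D_{(n,α,β)} a := (1-τ²)a'' + (β - α - (α+β+2)τ)a' + n(n+α+β+1)a. Then for |τ| < 1 and any C² function a, the identity D_{(n,α,β)}(((1-τ)/2)^{-α} a(τ)) = ((1-τ)/2)^{-α} D_{(n+α,-α,β)} a(τ) holds. -/

import Mathlib

set_option maxHeartbeats 1000000


open Set

/-- Derivative of `t ↦ ((1-t)/2)^p` (as a complex-valued function) for `t < 1`. -/
lemma rpow_half_hasDerivAt (p : ℝ) {t : ℝ} (ht : t < 1) :
    HasDerivAt (fun x : ℝ => ((((1 - x) / 2 : ℝ) ^ p : ℝ) : ℂ))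
      ((-p / 2 : ℂ) * ((((1 - t) / 2 : ℝ) ^ (p - 1) : ℝ) : ℂ)) t := by
  have hpos : 0 < (1 - t) / 2 := by linarith
  have hu : HasDerivAt (fun x : ℝ => (1 - x) / 2) (-1 / 2) t := by
    simpa using ((hasDerivAt_id t).const_sub 1).div_const 2
  have h := (Real.hasDerivAt_rpow_const (x := (1 - t) / 2) (p := p)
    (Or.inl hpos.ne')).comp t hu
  have h2 : HasDerivAt (fun x : ℝ => ((1 - x) / 2) ^ p)
      (-p / 2 * ((1 - t) / 2) ^ (p - 1)) t := by
    exact h.congr_deriv (by ring)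
  have := h2.ofReal_comp (z := t)
  convert this using 1
  push_cast
  ring

/-- The Jacobi differential operator
`D_{(n,α,β)} a = (1-τ²)a'' + (β - α - (α+β+2)τ)a' + n(n+α+β+1)a`. -/
noncomputable def jacobiOp (n α β : ℝ) (a : ℝ → ℂ) (τ : ℝ) : ℂ :=
  (1 - (τ : ℂ) ^ 2) * deriv (deriv a) τ +
    ((β : ℂ) - (α : ℂ) - ((α : ℂ) + (β : ℂ) + 2) * (τ : ℂ)) * deriv a τ +
    (n : ℂ) * ((n : ℂ) + (α : ℂ) + (β : ℂ) + 1) * a τ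

/-- `D_{(n,α,β)}(((1-τ)/2)^{-α} a(τ)) = ((1-τ)/2)^{-α} D_{(n+α,-α,β)} a(τ)`
for `|τ| < 1` and `C²` functions `a`. -/
theorem stmt9 (n α β : ℝ) (a : ℝ → ℂ)
    (hreg : ∀ τ ∈ Set.Ioo (-1 : ℝ) 1, ContDiffAt ℝ 2 a τ) :
    ∀ τ ∈ Set.Ioo (-1 : ℝ) 1,
      jacobiOp n α β (fun t => ((((1 - t) / 2 : ℝ) ^ (-α) : ℝ) : ℂ) * a t) τ =
        ((((1 - τ) / 2 : ℝ) ^ (-α) : ℝ) : ℂ) * jacobiOp (n + α) (-α) β a τ := by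
  intro τ hτ
  obtain ⟨hτ1, hτ2⟩ := hτ
  have hpos : 0 < (1 - τ) / 2 := by linarith
  -- abbreviations
  set R : ℝ → ℝ → ℂ := fun p t => ((((1 - t) / 2 : ℝ) ^ p : ℝ) : ℂ) with hR
  -- differentiability of a on the interval
  have hadiff : ∀ t ∈ Set.Ioo (-1 : ℝ) 1, DifferentiableAt ℝ a t := fun t ht =>
    (hreg t ht).differentiableAt (by norm_num)
  -- differentiability of deriv a at τ
  have hfd : DifferentiableAt ℝ (fderiv ℝ a) τ :=
    ((hreg τ ⟨hτ1, hτ2⟩).fderiv_right (m := 1) (by norm_num)).differentiableAt one_ne_zero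
  have ha' : DifferentiableAt ℝ (deriv a) τ := by
    have : DifferentiableAt ℝ (fun x => fderiv ℝ a x 1) τ :=
      hfd.clm_apply (differentiableAt_const 1)
    exact this
  -- first derivative of the product, on the interval
  have hf' : ∀ t ∈ Set.Ioo (-1 : ℝ) 1,
      HasDerivAt (fun t => R (-α) t * a t)
        ((α / 2 : ℂ) * R (-α - 1) t * a t + R (-α) t * deriv a t) t := by
    intro t ht
    have hW : HasDerivAt (fun x => R (-α) x) ((α / 2 : ℂ) * R (-α - 1) t) t := by
      have h := rpow_half_hasDerivAt (-α) ht.2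
      convert h using 1
      simp only [hR]
      push_cast
      ring
    exact hW.mul ((hadiff t ht).hasDerivAt)
  have hd1 : deriv (fun t => R (-α) t * a t) τ =
      (α / 2 : ℂ) * R (-α - 1) τ * a τ + R (-α) τ * deriv a τ :=
    (hf' τ ⟨hτ1, hτ2⟩).deriv
  -- eventual equality of first derivative
  have hev : deriv (fun t => R (-α) t * a t) =ᶠ[nhds τ]
      fun t => (α / 2 : ℂ) * R (-α - 1) t * a t + R (-α) t * deriv a t := by
    filter_upwards [isOpen_Ioo.mem_nhds (⟨hτ1, hτ2⟩ : τ ∈ Set.Ioo (-1 : ℝ) 1)]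
      with t ht using (hf' t ht).deriv
  -- second derivative
  have hW1 : HasDerivAt (fun t => (α / 2 : ℂ) * R (-α - 1) t)
      ((α / 2 : ℂ) * ((α + 1) / 2 : ℂ) * R (-α - 2) τ) τ := by
    have h := (rpow_half_hasDerivAt (-α - 1) hτ2).const_mul ((α / 2 : ℂ))
    rw [show (-α - 1 - 1 : ℝ) = -α - 2 by ring] at h
    exact h.congr_deriv (by simp only [hR]; push_cast; ring)
  have hW : HasDerivAt (fun x => R (-α) x) ((α / 2 : ℂ) * R (-α - 1) τ) τ := by
    have h := rpow_half_hasDerivAt (-α) hτ2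
    convert h using 1
    simp only [hR]
    push_cast
    ring
  have hg : HasDerivAt
      (fun t => (α / 2 : ℂ) * R (-α - 1) t * a t + R (-α) t * deriv a t)
      (((α / 2 : ℂ) * ((α + 1) / 2 : ℂ) * R (-α - 2) τ) * a τ +
        ((α / 2 : ℂ) * R (-α - 1) τ) * deriv a τ +
        (((α / 2 : ℂ) * R (-α - 1) τ) * deriv a τ + R (-α) τ * deriv (deriv a) τ)) τ :=
    (hW1.mul ((hadiff τ ⟨hτ1, hτ2⟩).hasDerivAt)).add (hW.mul ha'.hasDerivAt)
  have hd2 : deriv (deriv (fun t => R (-α) t * a t)) τ =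
      ((α / 2 : ℂ) * ((α + 1) / 2 : ℂ) * R (-α - 2) τ) * a τ +
        ((α / 2 : ℂ) * R (-α - 1) τ) * deriv a τ +
        (((α / 2 : ℂ) * R (-α - 1) τ) * deriv a τ + R (-α) τ * deriv (deriv a) τ) := by
    rw [hev.deriv_eq]
    exact hg.deriv
  -- key rpow relations (in ℝ, then cast to ℂ)
  have h1τ : (1 - τ : ℝ) ≠ 0 := by linarith
  have hr1 : (((1 - τ) / 2 : ℝ) ^ (-α - 1)) * (1 - τ) = 2 * ((1 - τ) / 2) ^ (-α) := by
    rw [show (-α - 1 : ℝ) = -α + (-1) by ring, Real.rpow_add hpos, Real.rpow_neg_one]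
    field_simp
  have hr2 : (((1 - τ) / 2 : ℝ) ^ (-α - 2)) * (1 - τ) ^ 2 = 4 * ((1 - τ) / 2) ^ (-α) := by
    rw [show (-α - 2 : ℝ) = -α + (-1) + (-1) by ring, Real.rpow_add hpos,
      Real.rpow_add hpos, Real.rpow_neg_one]
    field_simp
    ring
  have hc1 : ((((1 - τ) / 2 : ℝ) ^ (-α - 1) : ℝ) : ℂ) * (1 - (τ : ℂ)) =
      2 * ((((1 - τ) / 2 : ℝ) ^ (-α) : ℝ) : ℂ) := by exact_mod_cast hr1
  have hc2 : ((((1 - τ) / 2 : ℝ) ^ (-α - 2) : ℝ) : ℂ) * (1 - (τ : ℂ)) ^ 2 =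
      4 * ((((1 - τ) / 2 : ℝ) ^ (-α) : ℝ) : ℂ) := by exact_mod_cast hr2
  have hne : (1 : ℂ) - (τ : ℂ) ≠ 0 :=
    sub_ne_zero.mpr (by exact_mod_cast (by linarith : (1 : ℝ) ≠ τ))
  -- finish
  simp only [hR] at hd1 hd2
  simp only [jacobiOp, hd1, hd2, hR]
  push_cast at hc1 hc2 ⊢
  refine mul_right_cancel₀ (pow_ne_zero 2 hne) ?_
  linear_combination
    (((1 : ℂ) - (τ : ℂ) ^ 2) * (α : ℂ) * deriv a τ +
        ((β : ℂ) - (α : ℂ) - ((α : ℂ) + (β : ℂ) + 2) * (τ : ℂ)) * ((α : ℂ) / 2) * a τ) *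
      (1 - (τ : ℂ)) * hc1 +
    (((1 : ℂ) - (τ : ℂ) ^ 2) * ((α : ℂ) * ((α : ℂ) + 1) / 4) * a τ) * hc2
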